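/- Fix f : ℝ → ℝ which is odd, 2π-periodic, satisfies |f(x)| ≤ 1 for all x, and f(x) = 0 if and only if x ∈ πℤ (for example f = sin). Then there exists ε₀ > 0 such that for all ε with 0 < ε < ε₀ the following holds. Call a 4-tuple (a, b, h, p) of unit quaternions admissible if: (i) Re a = Re b = Re h = 0; (ii) Re((p⁻¹·b·p)⁻¹·b·a) = 0; (iii) (b·h)·p = p·(b·h); (iv) (a·p⁻¹)·h = −h·(a·p⁻¹); (v) there exist β' ∈ ℝ and a pure unit quaternion Q with b·h = e^{β'Q} and p = e^{ε f(β') Q}. For β ∈ ℝ let ρ(β) denote the tuple (i, e^{(π/2 + β + εf(β))k}·i, −j·e^{−εf(β)k}, e^{εf(β)k}). Then every admissible tuple is simultaneously conjugate, by a unit quaternion, to ρ(β) for exactly one β ∈ [0, 2π). (Hence the perturbed moduli space R^♮_π(B³, A₁ ∪ A₂) is homeomorphic to a circle parameterized by β ∈ ℝ/2πℤ.) -/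

import Mathlib

open Quaternion

set_option maxHeartbeats 1600000
noncomputable section

/-- The quaternion `i`. -/
def qi : ℍ[ℝ] := ⟨0, 1, 0, 0⟩

/-- The quaternion `j`. -/
def qj : ℍ[ℝ] := ⟨0, 0, 1, 0⟩

/-- The quaternion `k`. -/
def qk : ℍ[ℝ] := ⟨0, 0, 0, 1⟩

/-- The quaternionic exponential `e^{tQ} = cos t + (sin t) • Q` for a pure unit
quaternion `Q`. -/
def expQ (t : ℝ) (Q : ℍ[ℝ]) : ℍ[ℝ] := ((Real.cos t : ℝ) : ℍ[ℝ]) + (Real.sin t) • Q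

namespace PMSC

/-- a quaternion built from coordinates, typed as `ℍ[ℝ]` -/
def mkH (a b c d : ℝ) : ℍ[ℝ] := ⟨a, b, c, d⟩

@[simp] lemma mk_eq_mkH (a b c d : ℝ) : (⟨a, b, c, d⟩ : ℍ[ℝ]) = mkH a b c d := rfl
@[simp] lemma mkH_re (a b c d : ℝ) : (mkH a b c d).re = a := rfl
@[simp] lemma mkH_imI (a b c d : ℝ) : (mkH a b c d).imI = b := rfl
@[simp] lemma mkH_imJ (a b c d : ℝ) : (mkH a b c d).imJ = c := rfl
@[simp] lemma mkH_imK (a b c d : ℝ) : (mkH a b c d).imK = d := rfl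

/-- simp set for quaternion coordinates -/
lemma sumsq {x : ℍ[ℝ]} (h : ‖x‖ = 1) :
    x.re^2 + x.imI^2 + x.imJ^2 + x.imK^2 = 1 := by
  have h2 : Quaternion.normSq x = 1 := by
    rw [Quaternion.normSq_eq_norm_mul_self, h]; norm_num
  have := Quaternion.normSq_def' x
  rw [h2] at this; linarith

lemma unit_ne_zero {x : ℍ[ℝ]} (h : ‖x‖ = 1) : x ≠ 0 := by
  intro h0; rw [h0, norm_zero] at h; norm_num at h

lemma pure_mul_self {x : ℍ[ℝ]} (hre : x.re = 0) (h : ‖x‖ = 1) : x * x = -1 := by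
  have hs := sumsq h
  ext <;> simp [Quaternion.re_mul, Quaternion.imI_mul, Quaternion.imJ_mul,
    Quaternion.imK_mul, hre] <;> nlinarith [hs]

lemma re_mul_comm (x y : ℍ[ℝ]) : (x * y).re = (y * x).re := by
  simp [Quaternion.re_mul]; ring

-- transport lemmas: `g * x = X * g` means `g x g⁻¹ = X`.
lemma trans_mul {g x y X Y : ℍ[ℝ]} (hx : g * x = X * g) (hy : g * y = Y * g) :
    g * (x * y) = (X * Y) * g := by
  rw [← mul_assoc, hx, mul_assoc, hy, ← mul_assoc]

lemma trans_comp {g g' x X X' : ℍ[ℝ]} (hx : g * x = X * g) (hX : g' * X = X' * g') :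
    (g' * g) * x = X' * (g' * g) := by
  rw [mul_assoc, hx, ← mul_assoc, hX, mul_assoc]

lemma trans_eq {g x y X Y : ℍ[ℝ]} (hg : g ≠ 0) (hx : g * x = X * g) (hy : g * y = Y * g)
    (h : x = y) : X = Y := by
  apply mul_right_cancel₀ hg; rw [← hx, ← hy, h]

lemma trans_neg {g x X : ℍ[ℝ]} (hx : g * x = X * g) : g * (-x) = (-X) * g := by
  rw [mul_neg, hx, neg_mul]

lemma trans_smul {g x X : ℍ[ℝ]} (r : ℝ) (hx : g * x = X * g) :
    g * (r • x) = (r • X) * g := by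
  rw [mul_smul_comm, hx, smul_mul_assoc]

lemma trans_coe (g : ℍ[ℝ]) (r : ℝ) : g * (r : ℍ[ℝ]) = (r : ℍ[ℝ]) * g := by
  rw [← Quaternion.coe_commutes]

lemma trans_expQ {g Q Q' : ℍ[ℝ]} (t : ℝ) (hQ : g * Q = Q' * g) :
    g * expQ t Q = expQ t Q' * g := by
  unfold expQ
  rw [mul_add, add_mul, trans_coe, trans_smul t.sin hQ]

lemma trans_norm {g x X : ℍ[ℝ]} (hg : g ≠ 0) (hx : g * x = X * g) : ‖X‖ = ‖x‖ := by
  have := congrArg (‖·‖) hx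
  simp only [norm_mul] at this
  have hn : ‖g‖ ≠ 0 := norm_ne_zero_iff.mpr hg
  have hn : ‖g‖ ≠ 0 := norm_ne_zero_iff.mpr hg
  apply mul_right_cancel₀ hn
  rw [← this]; ring

lemma trans_re {g x X : ℍ[ℝ]} (hg : g ≠ 0) (hx : g * x = X * g) : X.re = x.re := by
  have hX : X = g * x * g⁻¹ := by rw [hx, mul_assoc, mul_inv_cancel₀ hg, mul_one]
  rw [hX, re_mul_comm, ← mul_assoc, inv_mul_cancel₀ hg, one_mul]

lemma trans_inv {g x X : ℍ[ℝ]} (hg : g ≠ 0) (hx0 : x ≠ 0) (hx : g * x = X * g) :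
    g * x⁻¹ = X⁻¹ * g := by
  have hX0 : X ≠ 0 := by
    intro h0; rw [h0, zero_mul] at hx
    exact hx0 (by simpa [hg] using mul_eq_zero.mp hx)
  apply mul_right_cancel₀ hx0
  rw [mul_assoc, inv_mul_cancel₀ hx0, mul_one, mul_assoc, hx, ← mul_assoc,
    inv_mul_cancel₀ hX0, one_mul]


open Real in
lemma expQ_qk_mk (t : ℝ) : expQ t qk = ⟨cos t, 0, 0, sin t⟩ := by
  ext <;> simp [expQ, qk]

open Real in
lemma expQ_inv (t : ℝ) : (expQ t qk)⁻¹ = expQ (-t) qk := by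
  rw [inv_eq_of_mul_eq_one_right]
  rw [expQ_qk_mk, expQ_qk_mk]
  ext <;> simp [Quaternion.re_mul, Quaternion.imI_mul, Quaternion.imJ_mul,
    Quaternion.imK_mul] <;> nlinarith [sin_sq_add_cos_sq t]

open Real in
lemma B_mk (t : ℝ) : expQ t qk * qi = ⟨0, cos t, sin t, 0⟩ := by
  rw [expQ_qk_mk]
  ext <;> simp [qi, Quaternion.re_mul, Quaternion.imI_mul, Quaternion.imJ_mul,
    Quaternion.imK_mul]

open Real in
lemma H_mk (t : ℝ) : -(qj * expQ (-t) qk) = ⟨0, sin t, -cos t, 0⟩ := by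
  rw [expQ_qk_mk]
  ext <;> simp [qj, Quaternion.re_mul, Quaternion.imI_mul, Quaternion.imJ_mul,
    Quaternion.imK_mul]

/-- conjugate a pure unit quaternion to `qi` -/
lemma conj_to_qi {x : ℍ[ℝ]} (hre : x.re = 0) (hn : ‖x‖ = 1) :
    ∃ g : ℍ[ℝ], g ≠ 0 ∧ g * x = qi * g := by
  have hs := sumsq hn
  rw [hre] at hs
  by_cases hI : x.imI = -1
  · have h2 : x.imJ = 0 ∧ x.imK = 0 := by constructor <;> nlinarith [hs]
    refine ⟨qk, ?_, ?_⟩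
    · intro h0
      have := congrArg QuaternionAlgebra.imK h0
      simp [qk] at this
    · ext <;> simp [qi, qk, Quaternion.re_mul, Quaternion.imI_mul,
        Quaternion.imJ_mul, Quaternion.imK_mul, hre, hI, h2.1, h2.2]
  · refine ⟨⟨1 + x.imI, 0, x.imK, -x.imJ⟩, ?_, ?_⟩
    · intro h0
      have := congrArg QuaternionAlgebra.re h0
      simp at this
      exact hI (by linarith)
    · ext <;> simp [qi, Quaternion.re_mul, Quaternion.imI_mul,
        Quaternion.imJ_mul, Quaternion.imK_mul, hre] <;> nlinarith [hs]

/-- conjugate a pure unit quaternion to `qk` -/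
lemma conj_to_qk {x : ℍ[ℝ]} (hre : x.re = 0) (hn : ‖x‖ = 1) :
    ∃ g : ℍ[ℝ], g ≠ 0 ∧ g * x = qk * g := by
  have hs := sumsq hn
  rw [hre] at hs
  by_cases hK : x.imK = -1
  · have h2 : x.imI = 0 ∧ x.imJ = 0 := by constructor <;> nlinarith [hs]
    refine ⟨qi, ?_, ?_⟩
    · intro h0
      have := congrArg QuaternionAlgebra.imI h0
      simp [qi] at this
    · ext <;> simp [qi, qk, Quaternion.re_mul, Quaternion.imI_mul,
        Quaternion.imJ_mul, Quaternion.imK_mul, hre, hK, h2.1, h2.2]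
  · refine ⟨⟨1 + x.imK, x.imJ, -x.imI, 0⟩, ?_, ?_⟩
    · intro h0
      have := congrArg QuaternionAlgebra.re h0
      simp at this
      exact hK (by linarith)
    · ext <;> simp [qk, Quaternion.re_mul, Quaternion.imI_mul,
        Quaternion.imJ_mul, Quaternion.imK_mul, hre] <;> nlinarith [hs]

/-- conjugate a pure unit quaternion with no `k` component to `qi`, fixing `qk` -/
lemma conj_to_qi_fix_qk {x : ℍ[ℝ]} (hre : x.re = 0) (hK : x.imK = 0) (hn : ‖x‖ = 1) :
    ∃ g : ℍ[ℝ], g ≠ 0 ∧ g * x = qi * g ∧ g * qk = qk * g := by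
  have hs := sumsq hn
  rw [hre, hK] at hs
  by_cases hI : x.imI = -1
  · have h2 : x.imJ = 0 := by nlinarith [hs]
    refine ⟨qk, ?_, ?_, rfl⟩
    · intro h0
      have := congrArg QuaternionAlgebra.imK h0
      simp [qk] at this
    · ext <;> simp [qi, qk, Quaternion.re_mul, Quaternion.imI_mul,
        Quaternion.imJ_mul, Quaternion.imK_mul, hre, hI, hK, h2]
  · refine ⟨⟨1 + x.imI, 0, 0, -x.imJ⟩, ?_, ?_, ?_⟩
    · intro h0
      have := congrArg QuaternionAlgebra.re h0
      simp at this
      exact hI (by linarith)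
    · ext <;> simp [qi, Quaternion.re_mul, Quaternion.imI_mul,
        Quaternion.imJ_mul, Quaternion.imK_mul, hre, hK] <;> nlinarith [hs]
    · ext <;> simp [qk, Quaternion.re_mul, Quaternion.imI_mul,
        Quaternion.imJ_mul, Quaternion.imK_mul]

/-- conjugate a pure unit quaternion with no `i` component to `qj`, fixing `qi` -/
lemma conj_to_qj_fix_qi {x : ℍ[ℝ]} (hre : x.re = 0) (hI : x.imI = 0) (hn : ‖x‖ = 1) :
    ∃ g : ℍ[ℝ], g ≠ 0 ∧ g * x = qj * g ∧ g * qi = qi * g := by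
  have hs := sumsq hn
  rw [hre, hI] at hs
  by_cases hJ : x.imJ = -1
  · have h2 : x.imK = 0 := by nlinarith [hs]
    refine ⟨qi, ?_, ?_, rfl⟩
    · intro h0
      have := congrArg QuaternionAlgebra.imI h0
      simp [qi] at this
    · ext <;> simp [qi, qj, Quaternion.re_mul, Quaternion.imI_mul,
        Quaternion.imJ_mul, Quaternion.imK_mul, hre, hI, hJ, h2]
  · refine ⟨⟨1 + x.imJ, -x.imK, 0, 0⟩, ?_, ?_, ?_⟩
    · intro h0
      have := congrArg QuaternionAlgebra.re h0
      simp at this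
      exact hJ (by linarith)
    · ext <;> simp [qj, Quaternion.re_mul, Quaternion.imI_mul,
        Quaternion.imJ_mul, Quaternion.imK_mul, hre, hI] <;> nlinarith [hs]
    · ext <;> simp [qi, Quaternion.re_mul, Quaternion.imI_mul,
        Quaternion.imJ_mul, Quaternion.imK_mul]

lemma step_bK {b h : ℍ[ℝ]} {β' : ℝ} (rb : b.re = 0) (nb : ‖b‖ = 1) (rh : h.re = 0)
    (hbh : b * h = expQ β' qk) (hsb : Real.sin β' ≠ 0) :
    b.imK = 0 ∧ h = ⟨0, -(Real.cos β') * b.imI - Real.sin β' * b.imJ,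
      Real.sin β' * b.imI - Real.cos β' * b.imJ, 0⟩ := by
  have hb0 : b ≠ 0 := unit_ne_zero nb
  have hh : h = (-b) * expQ β' qk := by
    apply mul_left_cancel₀ hb0
    rw [hbh, ← mul_assoc, mul_neg, pure_mul_self rb nb, neg_neg, one_mul]
  have hre := congrArg QuaternionAlgebra.re hh
  rw [rh, expQ_qk_mk] at hre
  simp [Quaternion.re_mul, rb] at hre
  have hK : b.imK = 0 := by
    rcases hre with h1 | h1
    · exact h1
    · exact absurd h1 hsb
  refine ⟨hK, ?_⟩
  rw [hh, expQ_qk_mk]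
  ext <;> simp [Quaternion.re_mul, Quaternion.imI_mul, Quaternion.imJ_mul,
    Quaternion.imK_mul, rb, hK] <;> ring

lemma aK_zero {a h : ℍ[ℝ]} {t : ℝ} (ra : a.re = 0) (rh : h.re = 0) (hK : h.imK = 0)
    (nh : ‖h‖ = 1) (st : Real.sin t ≠ 0)
    (cond4 : (a * (expQ t qk)⁻¹) * h = -(h * (a * (expQ t qk)⁻¹))) : a.imK = 0 := by
  rw [expQ_inv, expQ_qk_mk] at cond4
  have eI := congrArg QuaternionAlgebra.imI cond4
  have eJ := congrArg QuaternionAlgebra.imJ cond4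
  simp [Quaternion.re_mul, Quaternion.imI_mul, Quaternion.imJ_mul,
    Quaternion.imK_mul, ra, rh, hK] at eI eJ
  have hs := sumsq nh
  rw [rh, hK] at hs
  have key : (a.imK * Real.sin t)^2 = 0 := by
    linear_combination (a.imK*Real.sin t*h.imI/2) * eI + (a.imK*Real.sin t*h.imJ/2) * eJ
      - (a.imK*Real.sin t)^2 * hs
  rcases mul_eq_zero.mp (pow_eq_zero_iff two_ne_zero |>.mp key) with h1 | h1
  · exact h1
  · exact absurd h1 st

lemma anticomm_qi {x : ℍ[ℝ]} (hx : qi * x = -(x * qi)) : x.re = 0 ∧ x.imI = 0 := by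
  have e0 := congrArg QuaternionAlgebra.re hx
  have e1 := congrArg QuaternionAlgebra.imI hx
  simp [qi, Quaternion.re_mul, Quaternion.imI_mul] at e0 e1
  constructor <;> linarith

lemma expQ_zero : expQ 0 qk = 1 := by
  ext <;> simp [expQ, qk]

lemma rotation_form {y₁ y₂ c s : ℝ} (hu : y₁^2 + y₂^2 = 1) (hcs : c^2 + s^2 = 1)
    (he : c*y₁ + s*y₂ = 0) : (y₁ = s ∧ y₂ = -c) ∨ (y₁ = -s ∧ y₂ = c) := by
  set σ := y₁*s - y₂*c with hσdef
  have h1 : y₁ = σ * s := by rw [hσdef]; linear_combination c * he - y₁ * hcs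
  have h2 : y₂ = -(σ * c) := by rw [hσdef]; linear_combination s * he - y₂ * hcs
  have hσ : (σ - 1) * (σ + 1) = 0 := by
    rw [hσdef]; nlinarith [hu, hcs, he]
  rcases mul_eq_zero.mp hσ with h3 | h3
  · have : σ = 1 := by linarith
    left; rw [h1, h2, this]; constructor <;> ring
  · have : σ = -1 := by linarith
    right; rw [h1, h2, this]; constructor <;> ring


open Real in
lemma normal_form {f : ℝ → ℝ} (hodd : ∀ x : ℝ, f (-x) = -f x)
    (hbound : ∀ x : ℝ, |f x| ≤ 1)
    (hzero : ∀ x : ℝ, f x = 0 ↔ ∃ n : ℤ, x = Real.pi * n)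
    {ε : ℝ} (hε0 : 0 < ε) (hε1 : ε < 1)
    {a b h p : ℍ[ℝ]} (na : ‖a‖ = 1) (nb : ‖b‖ = 1) (nh : ‖h‖ = 1) (np : ‖p‖ = 1)
    (ra : a.re = 0) (rb : b.re = 0) (rh : h.re = 0)
    (cond4 : (a * p⁻¹) * h = -(h * (a * p⁻¹)))
    {β' : ℝ} {Q : ℍ[ℝ]} (nQ : ‖Q‖ = 1) (rQ : Q.re = 0)
    (hbh : b * h = expQ β' Q) (hp : p = expQ (ε * f β') Q) :
    ∃ β₀ : ℝ, ∃ g : ℍ[ℝ], g ≠ 0 ∧ g * a = qi * g ∧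
      g * b = (expQ (π/2 + β₀ + ε * f β₀) qk * qi) * g ∧
      g * h = (-(qj * expQ (-(ε * f β₀)) qk)) * g ∧
      g * p = expQ (ε * f β₀) qk * g := by
  have hqi0 : (qi : ℍ[ℝ]) ≠ 0 := by
    intro h0; have := congrArg QuaternionAlgebra.imI h0; simp [qi] at this
  have hf0 : f 0 = 0 := (hzero 0).mpr ⟨0, by norm_num⟩
  have hfπ : f π = 0 := (hzero π).mpr ⟨1, by norm_num⟩
  by_cases hf : f β' = 0
  · -- Case A : the perturbation vanishes, p = 1
    have hp1 : p = 1 := by rw [hp, hf, mul_zero]; ext <;> simp [expQ]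
    obtain ⟨n, hn⟩ := (hzero β').mp hf
    have hsin : Real.sin β' = 0 := by rw [hn, mul_comm]; exact Real.sin_int_mul_pi n
    have hcos2 : Real.cos β' ^ 2 = 1 := by nlinarith [Real.sin_sq_add_cos_sq β']
    set η := Real.cos β' with hη
    have hbhη : b * h = ((η : ℝ) : ℍ[ℝ]) := by
      rw [hbh]; ext <;> simp [expQ, hsin, hη]
    have hη0 : η ≠ 0 := by intro h0; rw [h0] at hcos2; norm_num at hcos2
    have hhb : h = -(η • b) := by
      apply mul_left_cancel₀ (unit_ne_zero nb)
      rw [hbhη, mul_neg, mul_smul_comm, pure_mul_self rb nb, smul_neg, neg_neg]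
      ext <;> simp
    have hab : a * b = -(b * a) := by
      rw [hp1, inv_one, mul_one, hhb] at cond4
      simp only [mul_neg, neg_mul, mul_smul_comm, smul_mul_assoc, neg_neg] at cond4
      have h2 : η • (a * b + b * a) = 0 := by
        rw [smul_add, ← cond4, add_neg_cancel]
      have h3 : a * b + b * a = 0 := by
        rcases smul_eq_zero.mp h2 with h4 | h4
        · exact absurd h4 hη0
        · exact h4
      exact eq_neg_of_add_eq_zero_left h3
    obtain ⟨g₁, hg₁0, hg₁a⟩ := conj_to_qi ra na
    have hg₁b : g₁ * b = (g₁ * b * g₁⁻¹) * g₁ := by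
      rw [mul_assoc, inv_mul_cancel₀ hg₁0, mul_one]
    set b₁ := g₁ * b * g₁⁻¹ with hb₁def
    have nb₁ : ‖b₁‖ = 1 := by rw [trans_norm hg₁0 hg₁b, nb]
    have hanti : qi * b₁ = -(b₁ * qi) :=
      trans_eq hg₁0 (trans_mul hg₁a hg₁b) (trans_neg (trans_mul hg₁b hg₁a)) hab
    obtain ⟨rb₁, hb₁I⟩ := anticomm_qi hanti
    obtain ⟨g₂, hg₂0, hg₂b, hg₂i⟩ := conj_to_qj_fix_qi rb₁ hb₁I nb₁
    have hg0 : g₂ * g₁ ≠ 0 := mul_ne_zero hg₂0 hg₁0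
    have hga : (g₂ * g₁) * a = qi * (g₂ * g₁) := trans_comp hg₁a hg₂i
    have hgb : (g₂ * g₁) * b = qj * (g₂ * g₁) := trans_comp hg₁b hg₂b
    have hgh : (g₂ * g₁) * h = (-(η • qj)) * (g₂ * g₁) := by
      rw [hhb]; exact trans_neg (trans_smul η hgb)
    have hgp : (g₂ * g₁) * p = 1 * (g₂ * g₁) := by rw [hp1, one_mul, mul_one]
    have hη1 : η = 1 ∨ η = -1 := by
      rcases mul_eq_zero.mp (show (η - 1) * (η + 1) = 0 by linear_combination hcos2) with h4 | h4
      · left; linarith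
      · right; linarith
    rcases hη1 with h1 | h1
    · refine ⟨0, g₂ * g₁, hg0, hga, ?_, ?_, ?_⟩
      · rw [hgb]; congr 1
        rw [hf0, mul_zero, add_zero, add_zero, B_mk]
        ext <;> simp [qj]
      · rw [hgh]; congr 1
        rw [H_mk, hf0, mul_zero, h1, one_smul]
        ext <;> simp [qj]
      · rw [hgp]; congr 1
        rw [hf0, mul_zero, expQ_zero]
    · refine ⟨π, qi * (g₂ * g₁), mul_ne_zero hqi0 hg0, ?_, ?_, ?_, ?_⟩
      · exact trans_comp hga rfl
      · refine trans_comp hgb ?_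
        rw [hfπ, mul_zero, add_zero, B_mk]
        ext <;> simp [qi, qj, Quaternion.re_mul, Quaternion.imI_mul,
          Quaternion.imJ_mul, Quaternion.imK_mul, Real.cos_add, Real.sin_add]
      · refine trans_comp hgh ?_
        rw [H_mk, hfπ, mul_zero, h1]
        ext <;> simp [qi, qj, Quaternion.re_mul, Quaternion.imI_mul,
          Quaternion.imJ_mul, Quaternion.imK_mul]
      · refine trans_comp hgp ?_
        rw [hfπ, mul_zero, expQ_zero, one_mul, mul_one]
  · -- Case B : the perturbation is nontrivial
    set t := ε * f β' with htdef
    have ht0 : t ≠ 0 := by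
      intro h0
      rcases mul_eq_zero.mp h0 with h1 | h1
      · linarith
      · exact hf h1
    have htb : |t| < 1 := by
      rw [htdef, abs_mul, abs_of_pos hε0]
      nlinarith [hbound β', abs_nonneg (f β')]
    have hta := abs_lt.mp htb
    have hπ3 := Real.pi_gt_three
    have hst : Real.sin t ≠ 0 := by
      intro h0
      exact ht0 ((Real.sin_eq_zero_iff_of_lt_of_lt (by linarith) (by linarith)).mp h0)
    have hsb : Real.sin β' ≠ 0 := by
      intro h0
      obtain ⟨n, hn⟩ := Real.sin_eq_zero_iff.mp h0
      exact hf ((hzero β').mpr ⟨n, by linarith [hn]⟩)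
    have hp0 : p ≠ 0 := unit_ne_zero np
    have hE0 : expQ t qk ≠ 0 := by
      have : expQ t qk * expQ (-t) qk = 1 := by
        rw [← expQ_inv, mul_inv_cancel₀]
        intro h0
        have := congrArg QuaternionAlgebra.re (expQ_qk_mk t ▸ h0)
        simp at this
        have := congrArg QuaternionAlgebra.imK (expQ_qk_mk t ▸ h0)
        simp at this
        nlinarith [Real.sin_sq_add_cos_sq t]
      exact left_ne_zero_of_mul_eq_one this
    -- stage 1 : conjugate Q to qk
    obtain ⟨g₁, hg₁0, hg₁Q⟩ := conj_to_qk rQ nQ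
    have cj1 : ∀ x : ℍ[ℝ], g₁ * x = (g₁ * x * g₁⁻¹) * g₁ := fun x => by
      rw [mul_assoc, inv_mul_cancel₀ hg₁0, mul_one]
    set a₁ := g₁ * a * g₁⁻¹ with ha₁def
    set b₁ := g₁ * b * g₁⁻¹ with hb₁def
    set h₁ := g₁ * h * g₁⁻¹ with hh₁def
    have hg₁a : g₁ * a = a₁ * g₁ := cj1 a
    have hg₁b : g₁ * b = b₁ * g₁ := cj1 b
    have hg₁h : g₁ * h = h₁ * g₁ := cj1 h
    have hg₁p : g₁ * p = expQ t qk * g₁ := by rw [hp]; exact trans_expQ _ hg₁Q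
    have na₁ : ‖a₁‖ = 1 := by rw [trans_norm hg₁0 hg₁a, na]
    have nb₁ : ‖b₁‖ = 1 := by rw [trans_norm hg₁0 hg₁b, nb]
    have nh₁ : ‖h₁‖ = 1 := by rw [trans_norm hg₁0 hg₁h, nh]
    have ra₁ : a₁.re = 0 := by rw [trans_re hg₁0 hg₁a, ra]
    have rb₁ : b₁.re = 0 := by rw [trans_re hg₁0 hg₁b, rb]
    have rh₁ : h₁.re = 0 := by rw [trans_re hg₁0 hg₁h, rh]
    have hbh₁ : b₁ * h₁ = expQ β' qk :=
      trans_eq hg₁0 (trans_mul hg₁b hg₁h) (trans_expQ β' hg₁Q) hbh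
    have hg₁w : g₁ * (a * p⁻¹) = (a₁ * (expQ t qk)⁻¹) * g₁ :=
      trans_mul hg₁a (trans_inv hg₁0 hp0 hg₁p)
    have cond4₁ : (a₁ * (expQ t qk)⁻¹) * h₁ = -(h₁ * (a₁ * (expQ t qk)⁻¹)) :=
      trans_eq hg₁0 (trans_mul hg₁w hg₁h) (trans_neg (trans_mul hg₁h hg₁w)) cond4
    obtain ⟨hbK₁, hh₁mk⟩ := step_bK rb₁ nb₁ rh₁ hbh₁ hsb
    have haK₁ : a₁.imK = 0 :=
      aK_zero ra₁ rh₁ (by rw [hh₁mk]) nh₁ hst cond4₁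
    -- stage 2 : conjugate a₁ to qi, fixing qk
    obtain ⟨g₂, hg₂0, hg₂a, hg₂k⟩ := conj_to_qi_fix_qk ra₁ haK₁ na₁
    have cj2 : ∀ x : ℍ[ℝ], g₂ * x = (g₂ * x * g₂⁻¹) * g₂ := fun x => by
      rw [mul_assoc, inv_mul_cancel₀ hg₂0, mul_one]
    set b₂ := g₂ * b₁ * g₂⁻¹ with hb₂def
    set h₂ := g₂ * h₁ * g₂⁻¹ with hh₂def
    have hg₂b : g₂ * b₁ = b₂ * g₂ := cj2 b₁
    have hg₂h : g₂ * h₁ = h₂ * g₂ := cj2 h₁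
    have hg₂p : g₂ * expQ t qk = expQ t qk * g₂ := trans_expQ _ hg₂k
    have nb₂ : ‖b₂‖ = 1 := by rw [trans_norm hg₂0 hg₂b, nb₁]
    have nh₂ : ‖h₂‖ = 1 := by rw [trans_norm hg₂0 hg₂h, nh₁]
    have rb₂ : b₂.re = 0 := by rw [trans_re hg₂0 hg₂b, rb₁]
    have rh₂ : h₂.re = 0 := by rw [trans_re hg₂0 hg₂h, rh₁]
    have hbh₂ : b₂ * h₂ = expQ β' qk :=
      trans_eq hg₂0 (trans_mul hg₂b hg₂h) (trans_expQ β' hg₂k) hbh₁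
    have hg₂w : g₂ * (a₁ * (expQ t qk)⁻¹) = (qi * (expQ t qk)⁻¹) * g₂ :=
      trans_mul hg₂a (trans_inv hg₂0 hE0 hg₂p)
    have cond4₂ : (qi * (expQ t qk)⁻¹) * h₂ = -(h₂ * (qi * (expQ t qk)⁻¹)) :=
      trans_eq hg₂0 (trans_mul hg₂w hg₂h) (trans_neg (trans_mul hg₂h hg₂w)) cond4₁
    obtain ⟨hbK₂, hh₂mk⟩ := step_bK rb₂ nb₂ rh₂ hbh₂ hsb
    -- the scalar equation
    have hscal : Real.cos (β' + t) * b₂.imI + Real.sin (β' + t) * b₂.imJ = 0 := by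
      rw [expQ_inv, expQ_qk_mk, hh₂mk] at cond4₂
      have eR := congrArg QuaternionAlgebra.re cond4₂
      simp [qi, Quaternion.re_mul, Quaternion.imI_mul, Quaternion.imJ_mul,
        Quaternion.imK_mul] at eR
      rw [Real.cos_add, Real.sin_add]
      linear_combination eR / 2
    have hb₂sum : b₂.imI^2 + b₂.imJ^2 = 1 := by
      have := sumsq nb₂; rw [rb₂, hbK₂] at this; nlinarith [this]
    have hcs : Real.cos (β' + t)^2 + Real.sin (β' + t)^2 = 1 := by
      nlinarith [Real.sin_sq_add_cos_sq (β' + t)]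
    rcases rotation_form hb₂sum hcs hscal with ⟨hI, hJ⟩ | ⟨hI, hJ⟩
    · -- b₂ = (0, sin(β'+t), -cos(β'+t), 0) : conjugate additionally by qi, β₀ = -β'
      have hb₂mk : b₂ = ⟨0, Real.sin (β' + t), -Real.cos (β' + t), 0⟩ := by
        ext <;> simp [rb₂, hbK₂, hI, hJ]
      have hft : ε * f (-β') = -t := by rw [hodd β', htdef]; ring
      have hga : (g₂ * g₁) * a = qi * (g₂ * g₁) := trans_comp hg₁a hg₂a
      have hgb : (g₂ * g₁) * b = b₂ * (g₂ * g₁) := trans_comp hg₁b hg₂b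
      have hgh : (g₂ * g₁) * h = h₂ * (g₂ * g₁) := trans_comp hg₁h hg₂h
      have hgp : (g₂ * g₁) * p = expQ t qk * (g₂ * g₁) := trans_comp hg₁p hg₂p
      refine ⟨-β', qi * (g₂ * g₁), mul_ne_zero hqi0 (mul_ne_zero hg₂0 hg₁0),
        trans_comp hga rfl, trans_comp hgb ?_, trans_comp hgh ?_, trans_comp hgp ?_⟩
      · rw [hft, B_mk, hb₂mk]
        ext <;> simp [qi, Quaternion.re_mul, Quaternion.imI_mul, Quaternion.imJ_mul,
          Quaternion.imK_mul, Real.cos_add, Real.sin_add] <;> ring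
      · rw [hft, H_mk, hh₂mk, hI, hJ]
        ext <;> simp [qi, Quaternion.re_mul, Quaternion.imI_mul, Quaternion.imJ_mul,
          Quaternion.imK_mul, Real.cos_add, Real.sin_add] <;>
          first
          | linear_combination Real.sin t * Real.sin_sq_add_cos_sq β'
          | linear_combination Real.cos t * Real.sin_sq_add_cos_sq β'
          | linear_combination (-(Real.sin t)) * Real.sin_sq_add_cos_sq β'
          | linear_combination (-(Real.cos t)) * Real.sin_sq_add_cos_sq β'
      · rw [hft, expQ_qk_mk, expQ_qk_mk]
        ext <;> simp [qi, Quaternion.re_mul, Quaternion.imI_mul, Quaternion.imJ_mul,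
          Quaternion.imK_mul]
    · -- b₂ = (0, -sin(β'+t), cos(β'+t), 0) : β₀ = β'
      have hb₂mk : b₂ = ⟨0, -Real.sin (β' + t), Real.cos (β' + t), 0⟩ := by
        ext <;> simp [rb₂, hbK₂, hI, hJ]
      refine ⟨β', g₂ * g₁, mul_ne_zero hg₂0 hg₁0, trans_comp hg₁a hg₂a,
        ?_, ?_, trans_comp hg₁p hg₂p⟩
      · have hgb : (g₂ * g₁) * b = b₂ * (g₂ * g₁) := trans_comp hg₁b hg₂b
        rw [hgb]; congr 1
        rw [← htdef, B_mk, hb₂mk]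
        ext <;> simp [Real.cos_add, Real.sin_add] <;> ring
      · have hgh : (g₂ * g₁) * h = h₂ * (g₂ * g₁) := trans_comp hg₁h hg₂h
        rw [hgh]; congr 1
        rw [← htdef, hh₂mk, hI, hJ, H_mk]
        ext <;> simp [Real.cos_add, Real.sin_add] <;>
          first
          | linear_combination Real.sin t * Real.sin_sq_add_cos_sq β'
          | linear_combination Real.cos t * Real.sin_sq_add_cos_sq β'
          | linear_combination (-(Real.sin t)) * Real.sin_sq_add_cos_sq β'
          | linear_combination (-(Real.cos t)) * Real.sin_sq_add_cos_sq β'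

lemma conj_conj {g₁ g₂ x X₁ X₂ : ℍ[ℝ]} (h₁0 : g₁ ≠ 0) (h₂0 : g₂ ≠ 0)
    (e₁ : g₁ * x * g₁⁻¹ = X₁) (e₂ : g₂ * x * g₂⁻¹ = X₂) :
    (g₂ * g₁⁻¹) * X₁ = X₂ * (g₂ * g₁⁻¹) := by
  rw [← e₁, ← e₂]
  have h1 : g₂ * g₁⁻¹ * (g₁ * x * g₁⁻¹) = g₂ * x * g₁⁻¹ := by
    have h3 : g₁⁻¹ * (g₁ * x * g₁⁻¹) = x * g₁⁻¹ := by
      rw [← mul_assoc, ← mul_assoc, inv_mul_cancel₀ h₁0, one_mul]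
    rw [mul_assoc g₂ g₁⁻¹, h3, ← mul_assoc]
  have h2 : g₂ * x * g₂⁻¹ * (g₂ * g₁⁻¹) = g₂ * x * g₁⁻¹ := by
    rw [mul_assoc (g₂ * x), ← mul_assoc g₂⁻¹ g₂, inv_mul_cancel₀ h₂0, one_mul]
  rw [h1, h2]

open Real in
lemma angle_eq {x y : ℝ} (hc : Real.cos x = Real.cos y) (hs : Real.sin x = Real.sin y) :
    ∃ n : ℤ, x = y + n * (2*π) := by
  have he : Complex.exp (x * Complex.I) = Complex.exp (y * Complex.I) := by
    rw [Complex.exp_mul_I, Complex.exp_mul_I, ← Complex.ofReal_cos, ← Complex.ofReal_cos,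
      ← Complex.ofReal_sin, ← Complex.ofReal_sin, hc, hs]
  obtain ⟨n, hn⟩ := Complex.exp_eq_exp_iff_exists_int.mp he
  refine ⟨n, ?_⟩
  have := congrArg Complex.im hn
  simpa [Complex.mul_im] using this

open Real in
lemma expQ_add_int (x : ℝ) (n : ℤ) : expQ (x + n * (2*π)) qk = expQ x qk := by
  rw [expQ_qk_mk, expQ_qk_mk, Real.cos_add_int_mul_two_pi, Real.sin_add_int_mul_two_pi]

open Real in
lemma uniq {f : ℝ → ℝ} {ε : ℝ} (hε0 : 0 < ε) (hε1 : ε < 1)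
    (hbound : ∀ x : ℝ, |f x| ≤ 1)
    {a b h p : ℍ[ℝ]} {β₁ β₂ : ℝ}
    (hI₁ : β₁ ∈ Set.Ico (0:ℝ) (2*π)) (hI₂ : β₂ ∈ Set.Ico (0:ℝ) (2*π))
    {g₁ g₂ : ℍ[ℝ]} (n₁ : ‖g₁‖ = 1) (n₂ : ‖g₂‖ = 1)
    (e₁a : g₁ * a * g₁⁻¹ = qi)
    (e₁b : g₁ * b * g₁⁻¹ = expQ (π/2 + β₁ + ε * f β₁) qk * qi)
    (e₁h : g₁ * h * g₁⁻¹ = -(qj * expQ (-(ε * f β₁)) qk))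
    (e₁p : g₁ * p * g₁⁻¹ = expQ (ε * f β₁) qk)
    (e₂a : g₂ * a * g₂⁻¹ = qi)
    (e₂b : g₂ * b * g₂⁻¹ = expQ (π/2 + β₂ + ε * f β₂) qk * qi)
    (e₂h : g₂ * h * g₂⁻¹ = -(qj * expQ (-(ε * f β₂)) qk))
    (e₂p : g₂ * p * g₂⁻¹ = expQ (ε * f β₂) qk) : β₁ = β₂ := by
  have hg₁0 : g₁ ≠ 0 := unit_ne_zero n₁
  have hg₂0 : g₂ ≠ 0 := unit_ne_zero n₂
  set u := g₂ * g₁⁻¹ with hudef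
  have hun : ‖u‖ = 1 := by
    rw [hudef, norm_mul, norm_inv, n₁, n₂]; norm_num
  have hu0 : u ≠ 0 := unit_ne_zero hun
  have hA := conj_conj hg₁0 hg₂0 e₁a e₂a
  have hB := conj_conj hg₁0 hg₂0 e₁b e₂b
  have hH := conj_conj hg₁0 hg₂0 e₁h e₂h
  have hP := conj_conj hg₁0 hg₂0 e₁p e₂p
  rw [← hudef] at hA hB hH hP
  -- u commutes with qi, so u = u₀ + u₁ i
  have hu2 : u.imJ = 0 ∧ u.imK = 0 := by
    have eJ := congrArg QuaternionAlgebra.imJ hA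
    have eK := congrArg QuaternionAlgebra.imK hA
    simp [qi, Quaternion.imJ_mul, Quaternion.imK_mul] at eJ eK
    constructor <;> linarith
  set t₁ := ε * f β₁ with ht₁def
  set t₂ := ε * f β₂ with ht₂def
  rw [expQ_qk_mk, expQ_qk_mk] at hP
  rw [H_mk, H_mk] at hH
  rw [B_mk, B_mk] at hB
  have pI := congrArg QuaternionAlgebra.imI hP
  have pJ := congrArg QuaternionAlgebra.imJ hP
  have hRe := congrArg QuaternionAlgebra.re hH
  have hK := congrArg QuaternionAlgebra.imK hH
  simp [Quaternion.re_mul, Quaternion.imI_mul, Quaternion.imJ_mul, Quaternion.imK_mul,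
    hu2.1, hu2.2] at pI pJ hRe hK
  -- u₁ vanishes
  have hu1 : u.imI = 0 := by
    have h1 : u.imI * Real.sin t₁ = 0 := by linarith [pJ, hRe]
    have h2 : u.imI * Real.cos t₁ = 0 := by linarith [pI, hK]
    have key : u.imI ^ 2 = 0 := by
      linear_combination u.imI * Real.sin t₁ * h1 + u.imI * Real.cos t₁ * h2
        - u.imI^2 * Real.sin_sq_add_cos_sq t₁
    exact pow_eq_zero_iff two_ne_zero |>.mp key
  have hu02 : u.re ^ 2 = 1 := by
    have := sumsq hun; rw [hu1, hu2.1, hu2.2] at this; nlinarith [this]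
  have hu00 : u.re ≠ 0 := by intro h0; rw [h0] at hu02; norm_num at hu02
  have pRe := congrArg QuaternionAlgebra.re hP
  have pK := congrArg QuaternionAlgebra.imK hP
  simp [Quaternion.re_mul, Quaternion.imI_mul, Quaternion.imJ_mul, Quaternion.imK_mul,
    hu1, hu2.1, hu2.2] at pRe pK
  have hct : Real.cos t₁ = Real.cos t₂ := by
    apply mul_left_cancel₀ hu00; linarith [pRe]
  have hst : Real.sin t₁ = Real.sin t₂ := by
    apply mul_left_cancel₀ hu00; linarith [pK]
  -- t₁ = t₂ by injectivity of sin on [-π/2, π/2]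
  have hπ3 := Real.pi_gt_three
  have htt : t₁ = t₂ := by
    have hb₁ := hbound β₁
    have hb₂ := hbound β₂
    have habs₁ : |t₁| ≤ ε := by
      rw [ht₁def, abs_mul, abs_of_pos hε0]; nlinarith [abs_nonneg (f β₁)]
    have habs₂ : |t₂| ≤ ε := by
      rw [ht₂def, abs_mul, abs_of_pos hε0]; nlinarith [abs_nonneg (f β₂)]
    have h₁ := abs_le.mp habs₁
    have h₂ := abs_le.mp habs₂
    exact Real.injOn_sin ⟨by linarith, by linarith⟩ ⟨by linarith, by linarith⟩ hst
  have hff : f β₁ = f β₂ := by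
    apply mul_left_cancel₀ (ne_of_gt hε0)
    rw [← ht₁def, ← ht₂def, htt]
  -- B equation gives angles equal mod 2π
  have bI := congrArg QuaternionAlgebra.imI hB
  have bJ := congrArg QuaternionAlgebra.imJ hB
  simp [Quaternion.re_mul, Quaternion.imI_mul, Quaternion.imJ_mul, Quaternion.imK_mul,
    hu1, hu2.1, hu2.2] at bI bJ
  have hc : Real.cos (π/2 + β₁ + t₁) = Real.cos (π/2 + β₂ + t₂) :=
    mul_left_cancel₀ hu00 (by linarith [bI])
  have hs : Real.sin (π/2 + β₁ + t₁) = Real.sin (π/2 + β₂ + t₂) :=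
    mul_left_cancel₀ hu00 (by linarith [bJ])
  obtain ⟨n, hn⟩ := angle_eq hc hs
  have hπ0 : (0:ℝ) < π := by linarith
  have hn1 : (-1 : ℝ) < n := by
    rcases hI₁ with ⟨h11, h12⟩; rcases hI₂ with ⟨h21, h22⟩; nlinarith [hn, htt]
  have hn2 : (n : ℝ) < 1 := by
    rcases hI₁ with ⟨h11, h12⟩; rcases hI₂ with ⟨h21, h22⟩; nlinarith [hn, htt]
  have hn0 : n = 0 := by
    have h1 : (-1 : ℤ) < n := by exact_mod_cast hn1
    have h2 : n < (1 : ℤ) := by exact_mod_cast hn2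
    omega
  rw [hn0] at hn
  simp at hn
  linarith [hn, htt]

lemma normalize_conj {g x X : ℍ[ℝ]} (hg : g ≠ 0) (hx : g * x = X * g) :
    (‖g‖⁻¹ • g) * x * (‖g‖⁻¹ • g)⁻¹ = X := by
  have hn : (‖g‖ : ℝ) ≠ 0 := norm_ne_zero_iff.mpr hg
  have hinv : (‖g‖⁻¹ • g)⁻¹ = ‖g‖ • g⁻¹ := by
    apply inv_eq_of_mul_eq_one_right
    rw [smul_mul_smul]
    rw [inv_mul_cancel₀ hn, mul_inv_cancel₀ hg, one_smul]
  rw [hinv, smul_mul_assoc, smul_mul_assoc, mul_smul_comm, smul_smul,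
    inv_mul_cancel₀ hn, one_smul, hx, mul_assoc, mul_inv_cancel₀ hg, mul_one]

lemma norm_normalize {g : ℍ[ℝ]} (hg : g ≠ 0) : ‖(‖g‖⁻¹ • g)‖ = 1 := by
  have hn : (0:ℝ) < ‖g‖ := norm_pos_iff.mpr hg
  rw [norm_smul, norm_inv, norm_norm, inv_mul_cancel₀ (ne_of_gt hn)]

end PMSC

/-- The perturbed moduli space `R^♮_π(B³, A₁ ∪ A₂)` is a circle: for all small enough
`ε > 0`, every admissible tuple `(a,b,h,p)` of unit quaternions — encoding a perturbed
traceless representation of the tangle-with-earring-and-perturbation-curve group — is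
simultaneously conjugate to
`ρ(β) = (i, e^{(π/2+β+εf(β))k}i, -j e^{-εf(β)k}, e^{εf(β)k})` for exactly one
`β ∈ [0, 2π)`. -/
theorem perturbed_moduli_space_is_circle
    (f : ℝ → ℝ)
    (hodd : ∀ x : ℝ, f (-x) = -f x)
    (hper : ∀ x : ℝ, f (x + 2 * Real.pi) = f x)
    (hbound : ∀ x : ℝ, |f x| ≤ 1)
    (hzero : ∀ x : ℝ, f x = 0 ↔ ∃ n : ℤ, x = Real.pi * n) :
    ∃ ε₀ : ℝ, 0 < ε₀ ∧ ∀ ε : ℝ, 0 < ε → ε < ε₀ →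
      ∀ a b h p : ℍ[ℝ],
        (‖a‖ = 1 ∧ ‖b‖ = 1 ∧ ‖h‖ = 1 ∧ ‖p‖ = 1) →
        (a.re = 0 ∧ b.re = 0 ∧ h.re = 0) →
        ((p⁻¹ * b * p)⁻¹ * b * a).re = 0 →
        (b * h) * p = p * (b * h) →
        (a * p⁻¹) * h = -(h * (a * p⁻¹)) →
        (∃ β' : ℝ, ∃ Q : ℍ[ℝ], ‖Q‖ = 1 ∧ Q.re = 0 ∧
          b * h = expQ β' Q ∧ p = expQ (ε * f β') Q) →
        ∃! β : ℝ, β ∈ Set.Ico 0 (2 * Real.pi) ∧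
          ∃ g : ℍ[ℝ], ‖g‖ = 1 ∧
            g * a * g⁻¹ = qi ∧
            g * b * g⁻¹ = expQ (Real.pi / 2 + β + ε * f β) qk * qi ∧
            g * h * g⁻¹ = -(qj * expQ (-(ε * f β)) qk) ∧
            g * p * g⁻¹ = expQ (ε * f β) qk := by
  refine ⟨1, one_pos, ?_⟩
  intro ε hε0 hε1 a b h p hn hr _cond2 _cond3 cond4 hv
  obtain ⟨na, nb, nh, np⟩ := hn
  obtain ⟨ra, rb, rh⟩ := hr
  obtain ⟨β', Q, nQ, rQ, hbh, hp⟩ := hv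
  obtain ⟨β₀, g, hg0, hga, hgb, hgh, hgp⟩ :=
    PMSC.normal_form hodd hbound hzero hε0 hε1 na nb nh np ra rb rh cond4 nQ rQ hbh hp
  have hπ0 : (0:ℝ) < 2 * Real.pi := by linarith [Real.pi_pos]
  set n := ⌊β₀ / (2 * Real.pi)⌋ with hndef
  set β := β₀ - n * (2 * Real.pi) with hβdef
  have hβ0 : 0 ≤ β := by
    rw [hβdef, hndef]; exact Int.sub_floor_div_mul_nonneg β₀ hπ0
  have hβ2 : β < 2 * Real.pi := by
    rw [hβdef, hndef]; exact Int.sub_floor_div_mul_lt β₀ hπ0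
  have hper' : Function.Periodic f (2 * Real.pi) := hper
  have hfβ : f β = f β₀ := by rw [hβdef]; exact hper'.sub_int_mul_eq n
  have hang : Real.pi/2 + β₀ + ε * f β₀ = (Real.pi/2 + β + ε * f β) + n * (2*Real.pi) := by
    rw [hfβ, hβdef]; ring
  have hB : expQ (Real.pi/2 + β₀ + ε * f β₀) qk = expQ (Real.pi/2 + β + ε * f β) qk := by
    rw [hang, PMSC.expQ_add_int]
  have hgb' : g * b = (expQ (Real.pi/2 + β + ε * f β) qk * qi) * g := by
    rw [← hB]; exact hgb
  have hgh' : g * h = (-(qj * expQ (-(ε * f β)) qk)) * g := by rw [hfβ]; exact hgh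
  have hgp' : g * p = expQ (ε * f β) qk * g := by rw [hfβ]; exact hgp
  refine ⟨β, ⟨⟨hβ0, hβ2⟩, ‖g‖⁻¹ • g, PMSC.norm_normalize hg0,
    PMSC.normalize_conj hg0 hga, PMSC.normalize_conj hg0 hgb',
    PMSC.normalize_conj hg0 hgh', PMSC.normalize_conj hg0 hgp'⟩, ?_⟩
  rintro β₂ ⟨hI₂, g₂, n₂, e₂a, e₂b, e₂h, e₂p⟩
  exact PMSC.uniq hε0 hε1 hbound hI₂ ⟨hβ0, hβ2⟩ n₂ (PMSC.norm_normalize hg0)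
    e₂a e₂b e₂h e₂p (PMSC.normalize_conj hg0 hga) (PMSC.normalize_conj hg0 hgb')
    (PMSC.normalize_conj hg0 hgh') (PMSC.normalize_conj hg0 hgp')
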